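/- Let d = 2m be even with d ≥ 4, let γ be the complex generated by {τ_{m−1}^k : 1 ≤ k ≤ m} and −γ the complex generated by {τ_{m+1}^k : m ≤ k ≤ d−1}. Then there exists a bijection φ : V_d → V_d with φ ∘ α = α ∘ φ that maps the 2d facets of B(1,d) bijectively onto the facets of Γ_m ∪ γ ∪ (−γ); in particular, Γ_m ∪ γ ∪ (−γ) is simplicially isomorphic to B(1,d). -/

import Mathlib

namespace SpherePaper

/-- Vertices of `∂C_d^*`: `(i, false)` plays the role of `x_i` and `(i, true)` of `y_i`,
with the cyclic index convention `x_{d+k} = x_k` built in via `ZMod d`. -/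
abbrev Vtx (d : ℕ) := ZMod d × Bool

/-- The vertex `x_k`. -/
def xv (d k : ℕ) : Vtx d := ((k : ZMod d), false)

/-- The vertex `y_k`. -/
def yv (d k : ℕ) : Vtx d := ((k : ZMod d), true)

/-- The antipodal map `α`, sending `x_k ↦ y_k` and `y_k ↦ x_k`. -/
def alphaV (d : ℕ) (v : Vtx d) : Vtx d := (v.1, !v.2)

/-- The facet `τ_j^k = {y_k, …, y_{k+j-1}} ∪ {x_{k+j}, …, x_{k+d-1}}` of `∂C_d^*`. -/
def tau (d j k : ℕ) : Finset (Vtx d) :=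
  (Finset.range d).image fun t => (((k + t : ℕ) : ZMod d), decide (t < j))

/-- The complex `Γ_j` generated by the facets `τ_j^k`, `1 ≤ k ≤ d`. -/
def Gamma (d j : ℕ) : Set (Finset (Vtx d)) :=
  {F | ∃ k, 1 ≤ k ∧ k ≤ d ∧ F ⊆ tau d j k}

/-- The `n`-th facet `σ_n` of `B(1,d)` (indices read periodically mod `2d`):
`σ_i = {x_1,…,x_i, y_{i+1},…,y_d}` and `σ_{d+i} = {y_1,…,y_i, x_{i+1},…,x_d}`
for `1 ≤ i ≤ d`. -/
def sigB (d n : ℕ) : Finset (Vtx d) :=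
  if (n - 1) % (2 * d) + 1 ≤ d then
    (Finset.range d).image fun t =>
      (((t + 1 : ℕ) : ZMod d), decide ((n - 1) % (2 * d) + 1 < t + 1))
  else
    (Finset.range d).image fun t =>
      (((t + 1 : ℕ) : ZMod d), decide (t + 1 ≤ (n - 1) % (2 * d) + 1 - d))

/-- `F` is a facet (an inclusion-maximal face) of the complex `C`. -/
def IsFacetOf {α : Type*} (C : Set (Finset α)) (F : Finset α) : Prop :=
  F ∈ C ∧ ∀ G ∈ C, F ⊆ G → F = G

set_option linter.unusedSectionVars false

/-! ### Auxiliary construction -/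

def piF (m : ℕ) (r : ZMod (2*m)) : ZMod (2*m) :=
  if (r - 1).val % 2 = 0 then (((r - 1).val / 2 : ℕ) : ZMod (2*m))
  else (((r - 1).val / 2 + m : ℕ) : ZMod (2*m))

def phiF (m : ℕ) (v : Vtx (2*m)) : Vtx (2*m) :=
  (piF m v.1, xor v.2 (decide ((v.1 - 1).val % 2 = 1)))

def psiF (m : ℕ) (q : ZMod (2*m)) : ZMod (2*m) :=
  if q.val < m then ((2*q.val+1 : ℕ) : ZMod (2*m)) else ((2*(q.val - m)+2 : ℕ) : ZMod (2*m))

section Lemmas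
variable (m : ℕ) [NeZero (2*m)] (hm : 1 ≤ m)
include hm

lemma val_sub (q : ZMod (2*m)) (k : ℕ) (hk : k ≤ 2*m) :
    (q - (k : ℕ)).val = if q.val < k then q.val + (2*m - k) else q.val - k := by
  have hq : q.val < 2*m := ZMod.val_lt q
  have h0 : ((k : ℕ) : ZMod (2*m)) + ((2*m - k : ℕ) : ZMod (2*m)) = 0 := by
    rw [← Nat.cast_add, show k + (2*m - k) = 2*m from by omega]
    exact ZMod.natCast_self _
  have h1 : q - (k : ℕ) = ((q.val + (2*m - k) : ℕ) : ZMod (2*m)) := by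
    rw [sub_eq_add_neg, neg_eq_of_add_eq_zero_right h0, Nat.cast_add,
      ZMod.natCast_rightInverse q]
  rw [h1, ZMod.val_natCast]
  rcases Nat.lt_or_ge q.val k with h | h
  · rw [if_pos h, Nat.mod_eq_of_lt (by omega)]
  · rw [if_neg (by omega), show q.val + (2*m - k) = (q.val - k) + 2*m from by omega,
      Nat.add_mod_right, Nat.mod_eq_of_lt (by omega)]

def graphB (c : ZMod (2*m) → Bool) : Finset (Vtx (2*m)) :=
  Finset.univ.image (fun r => (r, c r))

lemma range_image (f : ℕ → Bool) (k : ℕ) :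
    (Finset.range (2*m)).image (fun t => (((k + t : ℕ) : ZMod (2*m)), f t)) =
      graphB m (fun r => f ((r - (k : ℕ)).val)) := by
  ext ⟨r, b⟩
  simp only [graphB, Finset.mem_image, Finset.mem_range, Finset.mem_univ, true_and,
    Prod.mk.injEq]
  constructor
  · rintro ⟨t, ht, h1, h2⟩
    refine ⟨r, rfl, ?_⟩
    have : r - (k : ℕ) = ((t : ℕ) : ZMod (2*m)) := by rw [← h1]; push_cast; ring
    rw [this, ZMod.val_natCast, Nat.mod_eq_of_lt ht]
    exact h2
  · rintro ⟨a, rfl, h2⟩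
    refine ⟨(a - (k : ZMod (2*m))).val, ZMod.val_lt _, ?_, h2⟩
    rw [Nat.cast_add, ZMod.natCast_rightInverse (a - (k : ZMod (2*m)))]
    ring

lemma card_graphB (c : ZMod (2*m) → Bool) : (graphB m c).card = 2*m := by
  rw [graphB, Finset.card_image_of_injective _ (fun a b h => congrArg Prod.fst h),
    Finset.card_univ, ZMod.card]

lemma tau_graph (j k : ℕ) :
    tau (2*m) j k = graphB m (fun r => decide ((r - (k : ℕ)).val < j)) :=
  range_image m hm (fun t => decide (t < j)) k

lemma card_tau (j k : ℕ) : (tau (2*m) j k).card = 2*m := by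
  rw [tau_graph m hm, card_graphB m hm]

lemma sigB_graph_le (n : ℕ) (h1 : 1 ≤ n) (h2 : n ≤ 2*m) :
    sigB (2*m) n = graphB m (fun r => decide (n ≤ (r - (1 : ℕ)).val)) := by
  have hmod : (n - 1) % (2 * (2*m)) = n - 1 := Nat.mod_eq_of_lt (by omega)
  rw [sigB, if_pos (by rw [hmod]; omega)]
  have hfun : (fun t => (((t + 1 : ℕ) : ZMod (2*m)),
      decide ((n - 1) % (2 * (2*m)) + 1 < t + 1))) =
      (fun t => (((1 + t : ℕ) : ZMod (2*m)), (fun s => decide (n ≤ s)) t)) := by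
    funext t
    simp only [hmod]
    congr 2
    · omega
    · exact propext (by omega)
  rw [hfun, range_image m hm (fun s => decide (n ≤ s)) 1]

lemma sigB_graph_gt (n : ℕ) (h1 : 2*m < n) (h2 : n ≤ 4*m) :
    sigB (2*m) n = graphB m (fun r => decide ((r - (1 : ℕ)).val + 1 ≤ n - 2*m)) := by
  have hmod : (n - 1) % (2 * (2*m)) = n - 1 := Nat.mod_eq_of_lt (by omega)
  rw [sigB, if_neg (by rw [hmod]; omega)]
  have hfun : (fun t => (((t + 1 : ℕ) : ZMod (2*m)),
      decide (t + 1 ≤ (n - 1) % (2 * (2*m)) + 1 - 2*m))) =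
      (fun t => (((1 + t : ℕ) : ZMod (2*m)), (fun s => decide (s + 1 ≤ n - 2*m)) t)) := by
    funext t
    simp only [hmod]
    congr 2
    · omega
    · exact propext (by omega)
  rw [hfun, range_image m hm (fun s => decide (s + 1 ≤ n - 2*m)) 1]

lemma psi_sub_one_val (q : ZMod (2*m)) :
    ((psiF m q) - 1).val = if q.val < m then 2*q.val else 2*(q.val - m)+1 := by
  have hq : q.val < 2*m := ZMod.val_lt q
  rw [psiF]
  rcases Nat.lt_or_ge q.val m with h | h
  · rw [if_pos h, if_pos h]
    have : ((2*q.val+1 : ℕ) : ZMod (2*m)) - 1 = ((2*q.val : ℕ) : ZMod (2*m)) := by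
      push_cast; ring
    rw [this, ZMod.val_natCast, Nat.mod_eq_of_lt (by omega)]
  · rw [if_neg (by omega), if_neg (by omega)]
    have : ((2*(q.val - m)+2 : ℕ) : ZMod (2*m)) - 1 =
        ((2*(q.val - m)+1 : ℕ) : ZMod (2*m)) := by push_cast; ring
    rw [this, ZMod.val_natCast, Nat.mod_eq_of_lt (by omega)]

lemma pi_psi (q : ZMod (2*m)) : piF m (psiF m q) = q := by
  have hq : q.val < 2*m := ZMod.val_lt q
  rw [piF, psi_sub_one_val m hm]
  rcases Nat.lt_or_ge q.val m with h | h
  · rw [if_pos h, if_pos (show 2*q.val % 2 = 0 by omega),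
      show 2*q.val/2 = q.val from by omega, ZMod.natCast_rightInverse q]
  · rw [if_neg (show ¬ q.val < m by omega),
      if_neg (show ¬ (2*(q.val - m)+1) % 2 = 0 by omega),
      show (2*(q.val - m)+1)/2 + m = q.val from by omega, ZMod.natCast_rightInverse q]

lemma eps_psi (q : ZMod (2*m)) :
    decide (((psiF m q) - 1).val % 2 = 1) = decide (m ≤ q.val) := by
  rw [psi_sub_one_val m hm]
  rcases Nat.lt_or_ge q.val m with h | h
  · rw [if_pos h, decide_eq_decide]; omega
  · rw [if_neg (show ¬ q.val < m by omega), decide_eq_decide]; omega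

lemma psi_surj : Function.Surjective (psiF m) := by
  have : Function.Injective (psiF m) := by
    intro a b h
    have := congrArg (piF m) h
    rwa [pi_psi m hm, pi_psi m hm] at this
  exact Finite.injective_iff_surjective.mp this

lemma phi_surj : Function.Surjective (phiF m) := by
  rintro ⟨q, b⟩
  refine ⟨(psiF m q, xor b (decide (m ≤ q.val))), ?_⟩
  rw [phiF]
  simp only [pi_psi m hm, eps_psi m hm]
  rw [Bool.xor_assoc]
  simp

lemma image_graph (c : ZMod (2*m) → Bool) :
    (graphB m c).image (phiF m) =
      graphB m (fun q => xor (c (psiF m q)) (decide (m ≤ q.val))) := by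
  rw [graphB, graphB, Finset.image_image]
  conv_lhs => rw [← Finset.image_univ_of_surjective (psi_surj m hm), Finset.image_image]
  congr 1
  funext q
  simp only [Function.comp_apply, phiF, pi_psi m hm, eps_psi m hm]

end Lemmas

section Images
variable (m : ℕ) [NeZero (2*m)] (hm : 2 ≤ m)
include hm

lemma img1 (t : ℕ) (ht : t < m) :
    (sigB (2*m) (2*t+1)).image (phiF m) = tau (2*m) (m-1) (t+1) := by
  have hm1 : 1 ≤ m := by omega
  have hq' : ∀ q : ZMod (2*m), q.val < 2*m := fun q => ZMod.val_lt q
  rw [sigB_graph_le m hm1 _ (by omega) (by omega), image_graph m hm1, tau_graph m hm1]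
  congr 1
  funext q
  have hq := hq' q
  simp only [Nat.cast_one]
  rw [psi_sub_one_val m hm1, val_sub m hm1 q (t+1) (by omega)]
  split_ifs <;> (rw [Bool.eq_iff_iff]; simp; omega)

lemma img2 (t : ℕ) (ht : t < m) :
    (sigB (2*m) (2*t+2)).image (phiF m) = tau (2*m) m (t+1) := by
  have hm1 : 1 ≤ m := by omega
  have hq' : ∀ q : ZMod (2*m), q.val < 2*m := fun q => ZMod.val_lt q
  rw [sigB_graph_le m hm1 _ (by omega) (by omega), image_graph m hm1, tau_graph m hm1]
  congr 1
  funext q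
  have hq := hq' q
  simp only [Nat.cast_one]
  rw [psi_sub_one_val m hm1, val_sub m hm1 q (t+1) (by omega)]
  split_ifs <;> (rw [Bool.eq_iff_iff]; simp; omega)

lemma img3 (t : ℕ) (ht : t < m) :
    (sigB (2*m) (2*m+2*t+1)).image (phiF m) = tau (2*m) (m+1) (t+m) := by
  have hm1 : 1 ≤ m := by omega
  have hq' : ∀ q : ZMod (2*m), q.val < 2*m := fun q => ZMod.val_lt q
  rw [sigB_graph_gt m hm1 _ (by omega) (by omega), image_graph m hm1, tau_graph m hm1]
  congr 1
  funext q
  have hq := hq' q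
  simp only [Nat.cast_one]
  rw [psi_sub_one_val m hm1, val_sub m hm1 q (t+m) (by omega)]
  split_ifs <;> (rw [Bool.eq_iff_iff]; simp; omega)

lemma img4 (t : ℕ) (ht : t < m) :
    (sigB (2*m) (2*m+2*t+2)).image (phiF m) = tau (2*m) m (t+1+m) := by
  have hm1 : 1 ≤ m := by omega
  have hq' : ∀ q : ZMod (2*m), q.val < 2*m := fun q => ZMod.val_lt q
  rw [sigB_graph_gt m hm1 _ (by omega) (by omega), image_graph m hm1, tau_graph m hm1]
  congr 1
  funext q
  have hq := hq' q
  simp only [Nat.cast_one]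
  rw [psi_sub_one_val m hm1, val_sub m hm1 q (t+1+m) (by omega)]
  split_ifs <;> (rw [Bool.eq_iff_iff]; simp; omega)

end Images

def CondP (m j k : ℕ) : Prop :=
  (j = m ∧ 1 ≤ k ∧ k ≤ 2*m) ∨ (j = m - 1 ∧ 1 ≤ k ∧ k ≤ m) ∨
    (j = m + 1 ∧ m ≤ k ∧ k ≤ 2*m - 1)

section Facets
variable (m : ℕ) [NeZero (2*m)] (hm : 2 ≤ m)

lemma memU_iff (F : Finset (Vtx (2*m))) :
    F ∈ (Gamma (2*m) m ∪
        {F | ∃ k, 1 ≤ k ∧ k ≤ m ∧ F ⊆ tau (2*m) (m - 1) k} ∪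
        {F | ∃ k, m ≤ k ∧ k ≤ 2*m - 1 ∧ F ⊆ tau (2*m) (m + 1) k}) ↔
      ∃ j k, CondP m j k ∧ F ⊆ tau (2*m) j k := by
  simp only [Set.mem_union, Gamma, Set.mem_setOf_eq]
  constructor
  · rintro ((⟨k, h1, h2, h3⟩ | ⟨k, h1, h2, h3⟩) | ⟨k, h1, h2, h3⟩)
    · exact ⟨m, k, Or.inl ⟨rfl, h1, h2⟩, h3⟩
    · exact ⟨m - 1, k, Or.inr (Or.inl ⟨rfl, h1, h2⟩), h3⟩
    · exact ⟨m + 1, k, Or.inr (Or.inr ⟨rfl, h1, h2⟩), h3⟩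
  · rintro ⟨j, k, (⟨rfl, h1, h2⟩ | ⟨rfl, h1, h2⟩ | ⟨rfl, h1, h2⟩), h3⟩
    · exact Or.inl (Or.inl ⟨k, h1, h2, h3⟩)
    · exact Or.inl (Or.inr ⟨k, h1, h2, h3⟩)
    · exact Or.inr ⟨k, h1, h2, h3⟩

include hm

lemma isFacet_iff (F : Finset (Vtx (2*m))) :
    IsFacetOf (Gamma (2*m) m ∪
        {F | ∃ k, 1 ≤ k ∧ k ≤ m ∧ F ⊆ tau (2*m) (m - 1) k} ∪
        {F | ∃ k, m ≤ k ∧ k ≤ 2*m - 1 ∧ F ⊆ tau (2*m) (m + 1) k}) F ↔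
      ∃ j k, CondP m j k ∧ F = tau (2*m) j k := by
  have hm1 : 1 ≤ m := by omega
  constructor
  · rintro ⟨hF, hmax⟩
    rcases (memU_iff m F).mp hF with ⟨j, k, hc, hsub⟩
    exact ⟨j, k, hc, hmax _ ((memU_iff m _).mpr ⟨j, k, hc, subset_rfl⟩) hsub⟩
  · rintro ⟨j, k, hc, rfl⟩
    refine ⟨(memU_iff m _).mpr ⟨j, k, hc, subset_rfl⟩, ?_⟩
    intro G hG hsub
    rcases (memU_iff m G).mp hG with ⟨j', k', hc', hsub'⟩
    have h2 : tau (2*m) j k = tau (2*m) j' k' :=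
      Finset.eq_of_subset_of_card_le (hsub.trans hsub')
        (by rw [card_tau m hm1, card_tau m hm1])
    exact Finset.Subset.antisymm hsub (h2 ▸ hsub')

lemma img_all (n : ℕ) (h1 : 1 ≤ n) (h2 : n ≤ 4*m) :
    ∃ j k, CondP m j k ∧ (sigB (2*m) n).image (phiF m) = tau (2*m) j k := by
  rcases Nat.lt_or_ge n (2*m+1) with hn | hn
  · rcases Nat.even_or_odd n with ⟨t, hteq⟩ | ⟨t, hteq⟩
    · refine ⟨m, (t-1)+1, Or.inl ⟨rfl, by omega, by omega⟩, ?_⟩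
      rw [show n = 2*(t-1)+2 from by omega]
      exact img2 m hm (t-1) (by omega)
    · refine ⟨m-1, t+1, Or.inr (Or.inl ⟨rfl, by omega, by omega⟩), ?_⟩
      rw [show n = 2*t+1 from by omega]
      exact img1 m hm t (by omega)
  · rcases Nat.even_or_odd n with ⟨t, hteq⟩ | ⟨t, hteq⟩
    · refine ⟨m, (t-m-1)+1+m, Or.inl ⟨rfl, by omega, by omega⟩, ?_⟩
      rw [show n = 2*m+2*(t-m-1)+2 from by omega]
      exact img4 m hm (t-m-1) (by omega)
    · refine ⟨m+1, (t-m)+m, Or.inr (Or.inr ⟨rfl, by omega, by omega⟩), ?_⟩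
      rw [show n = 2*m+2*(t-m)+1 from by omega]
      exact img3 m hm (t-m) (by omega)

lemma surj_all (j k : ℕ) (hc : CondP m j k) :
    ∃ n, 1 ≤ n ∧ n ≤ 4*m ∧ (sigB (2*m) n).image (phiF m) = tau (2*m) j k := by
  rcases hc with ⟨hj, h1, h2⟩ | ⟨hj, h1, h2⟩ | ⟨hj, h1, h2⟩ <;> rw [hj]
  · rcases Nat.lt_or_ge k (m+1) with h | h
    · refine ⟨2*(k-1)+2, by omega, by omega, ?_⟩
      have := img2 m hm (k-1) (by omega)
      rwa [show (k-1)+1 = k from by omega] at this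
    · refine ⟨2*m+2*(k-m-1)+2, by omega, by omega, ?_⟩
      have := img4 m hm (k-m-1) (by omega)
      rwa [show (k-m-1)+1+m = k from by omega] at this
  · refine ⟨2*(k-1)+1, by omega, by omega, ?_⟩
    have := img1 m hm (k-1) (by omega)
    rwa [show (k-1)+1 = k from by omega] at this
  · refine ⟨2*m+2*(k-m)+1, by omega, by omega, ?_⟩
    have := img3 m hm (k-m) (by omega)
    rwa [show (k-m)+m = k from by omega] at this

end Facets

/-- Let `d = 2m` be even, `d ≥ 4`; let `γ` be generated by `τ_{m-1}^k`
(`1 ≤ k ≤ m`) and `-γ` by `τ_{m+1}^k` (`m ≤ k ≤ d-1`). Then there is a bijection `φ` of the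
vertex set commuting with `α` that maps the `2d` facets of `B(1,d)` bijectively onto the
facets of `Γ_m ∪ γ ∪ (-γ)`; in particular, `Γ_m ∪ γ ∪ (-γ)` is simplicially isomorphic to
`B(1,d)`. -/
theorem statement7 (m : ℕ) (hm : 2 ≤ m) :
    ∃ φ : Vtx (2 * m) → Vtx (2 * m), Function.Bijective φ ∧
      φ ∘ alphaV (2 * m) = alphaV (2 * m) ∘ φ ∧
      (∀ F : Finset (Vtx (2 * m)),
        (∃ n, 1 ≤ n ∧ n ≤ 2 * (2 * m) ∧ F = (sigB (2 * m) n).image φ) ↔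
          IsFacetOf (Gamma (2 * m) m ∪
            {F | ∃ k, 1 ≤ k ∧ k ≤ m ∧ F ⊆ tau (2 * m) (m - 1) k} ∪
            {F | ∃ k, m ≤ k ∧ k ≤ 2 * m - 1 ∧ F ⊆ tau (2 * m) (m + 1) k}) F) ∧
      (∀ G : Finset (Vtx (2 * m)),
        (∃ F : Finset (Vtx (2 * m)),
            (∃ n, 1 ≤ n ∧ n ≤ 2 * (2 * m) ∧ F ⊆ sigB (2 * m) n) ∧
            G = F.image φ) ↔
          G ∈ Gamma (2 * m) m ∪
            {F | ∃ k, 1 ≤ k ∧ k ≤ m ∧ F ⊆ tau (2 * m) (m - 1) k} ∪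
            {F | ∃ k, m ≤ k ∧ k ≤ 2 * m - 1 ∧ F ⊆ tau (2 * m) (m + 1) k}) := by
  haveI : NeZero (2*m) := ⟨by omega⟩
  refine ⟨phiF m, Finite.surjective_iff_bijective.mp (phi_surj m (by omega)), ?_, ?_, ?_⟩
  · funext v
    obtain ⟨r, b⟩ := v
    simp only [Function.comp_apply, alphaV, phiF]
    cases b <;> cases hd : decide ((r - 1).val % 2 = 1) <;> simp <;> exact hd
  · intro F
    constructor
    · rintro ⟨n, hn1, hn2, rfl⟩
      rcases img_all m hm n hn1 (by omega) with ⟨j, k, hc, heq⟩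
      rw [heq]
      exact (isFacet_iff m hm _).mpr ⟨j, k, hc, rfl⟩
    · intro h
      rcases (isFacet_iff m hm F).mp h with ⟨j, k, hc, rfl⟩
      rcases surj_all m hm j k hc with ⟨n, h1, h2, heq⟩
      exact ⟨n, h1, by omega, heq.symm⟩
  · intro G
    constructor
    · rintro ⟨F, ⟨n, hn1, hn2, hsub⟩, rfl⟩
      rcases img_all m hm n hn1 (by omega) with ⟨j, k, hc, heq⟩
      refine (memU_iff m _).mpr ⟨j, k, hc, ?_⟩
      calc F.image (phiF m) ⊆ (sigB (2*m) n).image (phiF m) :=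
            Finset.image_subset_image hsub
        _ = tau (2*m) j k := heq
    · intro hG
      rcases (memU_iff m G).mp hG with ⟨j, k, hc, hsub⟩
      rcases surj_all m hm j k hc with ⟨n, h1, h2, heq⟩
      refine ⟨(sigB (2*m) n).filter (fun v => phiF m v ∈ G),
        ⟨n, h1, by omega, Finset.filter_subset _ _⟩, ?_⟩
      ext x
      simp only [Finset.mem_image, Finset.mem_filter]
      constructor
      · intro hx
        have hx2 : x ∈ (sigB (2*m) n).image (phiF m) := heq ▸ hsub hx
        rcases Finset.mem_image.mp hx2 with ⟨v, hv, rfl⟩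
        exact ⟨v, ⟨hv, hx⟩, rfl⟩
      · rintro ⟨v, ⟨hv1, hv2⟩, rfl⟩
        exact hv2

end SpherePaper
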